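/- Let d ≥ 2 be an integer, let a, b, c ∈ [0,1] with a ≤ b and c < 1/2, and let x_1, x_2 be reals with a ≤ x_1 ≤ b and 0 ≤ x_2 ≤ c. Then: (i) if 2 ≤ d ≤ 5 and (d−2)·a ≤ 1, then d(1−x_2)(1+x_1+x_1·x_2)^{d−1}/(1+2x_1)^{d+1} ≤ d(1+a)^{d−1}/(1+2a)^{d+1}; (ii) if d ∈ {6,7} and (d−2)·a ≥ 1 + d·a·c, then d(1−x_2)(1+x_1+x_1·x_2)^{d−1}/(1+2x_1)^{d+1} ≤ d(1−c)(1+a+a·c)^{d−1}/(1+2a)^{d+1}; (iii) if 2 ≤ d ≤ 4 and b·((1−c)·d − 2) ≤ 1, then d·x_1(1+x_1+x_1·x_2)^{d−1}/(1+2x_1)^d ≤ d·b(1+b+b·c)^{d−1}/(1+2b)^d; (iv) if 5 ≤ d ≤ 7, then d·x_1(1+x_1+x_1·x_2)^{d−1}/(1+2x_1)^d ≤ (d−1)^{d−1}/(d^{d−1}·(1−c)). -/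

import Mathlib

set_option maxHeartbeats 1000000

theorem aux_pow_sub_pow_le (u v : ℝ) (hv : 0 ≤ v) (hvu : v ≤ u) (n : ℕ) :
    u^(n+1) - v^(n+1) ≤ ((n:ℝ)+1)*(u-v)*u^n := by
  induction n with
  | zero => norm_num
  | succ n ih =>
    have hu : 0 ≤ u := hv.trans hvu
    have hvn : v^(n+1) ≤ u^(n+1) := pow_le_pow_left₀ hv hvu _
    have h := mul_le_mul_of_nonneg_left ih hu
    have hmul := mul_le_mul_of_nonneg_left hvn (sub_nonneg.2 hvu)
    push_cast
    calc u^(n+1+1) - v^(n+1+1)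
        = u*(u^(n+1)-v^(n+1)) + (u-v)*v^(n+1) := by ring
      _ ≤ u*(((n:ℝ)+1)*(u-v)*u^n) + (u-v)*u^(n+1) := add_le_add h hmul
      _ = ((n:ℝ)+1+1)*(u-v)*u^(n+1) := by ring

theorem aux_le_pow_sub_pow (u v : ℝ) (hu : 0 ≤ u) (huv : u ≤ v) (n : ℕ) :
    ((n:ℝ)+1)*(v-u)*u^n ≤ v^(n+1) - u^(n+1) := by
  induction n with
  | zero => norm_num
  | succ n ih =>
    have hv : 0 ≤ v := hu.trans huv
    have h := mul_le_mul_of_nonneg_left ih hv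
    have hnn : (0:ℝ) ≤ ((n:ℝ)+1)*(v-u) := by
      have : (0:ℝ) ≤ (n:ℝ)+1 := by positivity
      exact mul_nonneg this (sub_nonneg.2 huv)
    push_cast
    calc ((n:ℝ)+1+1)*(v-u)*u^(n+1)
        = (((n:ℝ)+1)*(v-u))*(u*u^n) + (v-u)*u^(n+1) := by ring
      _ ≤ (((n:ℝ)+1)*(v-u))*(v*u^n) + (v-u)*u^(n+1) :=
          add_le_add (mul_le_mul_of_nonneg_left
            (mul_le_mul_of_nonneg_right huv (pow_nonneg hu n)) hnn) le_rfl
      _ = v*(((n:ℝ)+1)*(v-u)*u^n) + (v-u)*u^(n+1) := by ring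
      _ ≤ v*(v^(n+1)-u^(n+1)) + (v-u)*u^(n+1) := add_le_add h le_rfl
      _ = v^(n+1+1) - u^(n+1+1) := by ring

theorem aux_W (n : ℕ) (γ w W : ℝ) (hγ : 0 ≤ γ) (hw : 0 ≤ w) (hwW : w ≤ W)
    (h1 : ((n:ℝ)+1)*(γ*W) ≤ 1) : w*(1-γ*w)^n ≤ W*(1-γ*W)^n := by
  have hW : 0 ≤ W := hw.trans hwW
  have hγW : γ*W ≤ 1 := by nlinarith [mul_nonneg hγ hW]
  have hder : ∀ t : ℝ, HasDerivAt (fun t : ℝ => t*(1-γ*t)^n)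
      ((1-γ*t)^n + t*((n:ℝ)*(1-γ*t)^(n-1)*(-γ))) t := by
    intro t
    have h0 : HasDerivAt (fun t : ℝ => 1-γ*t) (-γ) t := by
      simpa using ((hasDerivAt_id' t).const_mul γ).const_sub (1:ℝ)
    exact ((hasDerivAt_id' t).mul (h0.pow n)).congr_deriv (by simp)
  have hmono : MonotoneOn (fun t : ℝ => t*(1-γ*t)^n) (Set.Icc 0 W) := by
    apply monotoneOn_of_deriv_nonneg (convex_Icc 0 W)
    · exact Continuous.continuousOn (by continuity)
    · exact fun t ht => (hder t).differentiableAt.differentiableWithinAt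
    · intro t ht
      rw [interior_Icc] at ht
      rw [(hder t).deriv]
      have hγt : γ*t ≤ γ*W := mul_le_mul_of_nonneg_left ht.2.le hγ
      have hγt0 : 0 ≤ γ*t := mul_nonneg hγ ht.1.le
      have hp : 0 ≤ 1-γ*t := by linarith
      match n with
      | 0 => norm_num
      | (m+1) =>
        have h2 : 0 ≤ 1 - γ*t - ((m:ℝ)+1)*(γ*t) := by
          have : ((m:ℝ)+1+1)*(γ*t) ≤ ((m:ℝ)+1+1)*(γ*W) := by
            apply mul_le_mul_of_nonneg_left hγt (by positivity)
          push_cast at h1 ⊢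
          nlinarith
        have h3 := mul_nonneg (pow_nonneg hp m) h2
        simp only [Nat.add_sub_cancel]
        push_cast
        rw [pow_succ]
        nlinarith [h3]
  exact hmono ⟨hw, hwW⟩ ⟨hW, le_rfl⟩ hwW

theorem aux_monoX (k : ℕ) (a x t : ℝ) (ha : 0 ≤ a) (hax : a ≤ x) (ht0 : 0 ≤ t) (ht1 : t ≤ 1) :
    (1+x+x*t)^(k+1) * (1+2*a)^(k+3) ≤ (1+a+a*t)^(k+1) * (1+2*x)^(k+3) := by
  have hx0 : 0 ≤ x := ha.trans hax
  have cross : (1+x+x*t)*(1+2*a) ≤ (1+a+a*t)*(1+2*x) := by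
    nlinarith [mul_nonneg (sub_nonneg.2 hax) (sub_nonneg.2 ht1)]
  have hP0 : (0:ℝ) ≤ (1+x+x*t)*(1+2*a) := by nlinarith [mul_nonneg hx0 ht0]
  have h1 : ((1+x+x*t)*(1+2*a))^(k+1) ≤ ((1+a+a*t)*(1+2*x))^(k+1) :=
    pow_le_pow_left₀ hP0 cross _
  have h2 : (1+2*a)^2 ≤ (1+2*x)^2 := pow_le_pow_left₀ (by linarith) (by linarith) 2
  calc (1+x+x*t)^(k+1) * (1+2*a)^(k+3)
      = ((1+x+x*t)*(1+2*a))^(k+1) * (1+2*a)^2 := by rw [mul_pow]; ring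
    _ ≤ ((1+a+a*t)*(1+2*x))^(k+1) * (1+2*x)^2 := by
        apply mul_le_mul h1 h2 (by positivity) (by positivity)
    _ = (1+a+a*t)^(k+1) * (1+2*x)^(k+3) := by rw [mul_pow]; ring

theorem aux_amgm5 (a b : ℝ) (ha : 0 ≤ a) (hb : 0 ≤ b) : 5^5*a*b^4 ≤ (a+4*b)^5 := by
  have h : ∀ i j : ℕ, 0 ≤ (a-b)^2*(a^i*b^j) := fun i j =>
    mul_nonneg (sq_nonneg _) (mul_nonneg (pow_nonneg ha _) (pow_nonneg hb _))
  nlinarith [h 0 3, h 1 2, h 2 1, h 3 0]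

theorem aux_amgm6 (a b : ℝ) (ha : 0 ≤ a) (hb : 0 ≤ b) : 6^6*a*b^5 ≤ (a+5*b)^6 := by
  have h : ∀ i j : ℕ, 0 ≤ (a-b)^2*(a^i*b^j) := fun i j =>
    mul_nonneg (sq_nonneg _) (mul_nonneg (pow_nonneg ha _) (pow_nonneg hb _))
  nlinarith [h 0 4, h 1 3, h 2 2, h 3 1, h 4 0]

theorem aux_amgm7 (a b : ℝ) (ha : 0 ≤ a) (hb : 0 ≤ b) : 7^7*a*b^6 ≤ (a+6*b)^7 := by
  have h : ∀ i j : ℕ, 0 ≤ (a-b)^2*(a^i*b^j) := fun i j =>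
    mul_nonneg (sq_nonneg _) (mul_nonneg (pow_nonneg ha _) (pow_nonneg hb _))
  nlinarith [h 0 5, h 1 4, h 2 3, h 3 2, h 4 1, h 5 0]

theorem stmt_9 (d : ℕ) (hd : 2 ≤ d) (a b c : ℝ)
    (ha : a ∈ Set.Icc (0 : ℝ) 1) (hb : b ∈ Set.Icc (0 : ℝ) 1)
    (hc0 : 0 ≤ c) (hc1 : c ∈ Set.Icc (0 : ℝ) 1) (hab : a ≤ b) (hchalf : c < 1 / 2)
    (x₁ x₂ : ℝ) (hx1a : a ≤ x₁) (hx1b : x₁ ≤ b) (hx20 : 0 ≤ x₂) (hx2c : x₂ ≤ c) :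
    (d ≤ 5 → ((d : ℝ) - 2) * a ≤ 1 →
      (d : ℝ) * (1 - x₂) * (1 + x₁ + x₁ * x₂) ^ (d - 1) / (1 + 2 * x₁) ^ (d + 1) ≤
        (d : ℝ) * (1 + a) ^ (d - 1) / (1 + 2 * a) ^ (d + 1)) ∧
    ((d = 6 ∨ d = 7) → 1 + (d : ℝ) * a * c ≤ ((d : ℝ) - 2) * a →
      (d : ℝ) * (1 - x₂) * (1 + x₁ + x₁ * x₂) ^ (d - 1) / (1 + 2 * x₁) ^ (d + 1) ≤
        (d : ℝ) * (1 - c) * (1 + a + a * c) ^ (d - 1) / (1 + 2 * a) ^ (d + 1)) ∧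
    (d ≤ 4 → b * ((1 - c) * (d : ℝ) - 2) ≤ 1 →
      (d : ℝ) * x₁ * (1 + x₁ + x₁ * x₂) ^ (d - 1) / (1 + 2 * x₁) ^ d ≤
        (d : ℝ) * b * (1 + b + b * c) ^ (d - 1) / (1 + 2 * b) ^ d) ∧
    (5 ≤ d → d ≤ 7 →
      (d : ℝ) * x₁ * (1 + x₁ + x₁ * x₂) ^ (d - 1) / (1 + 2 * x₁) ^ d ≤
        ((d : ℝ) - 1) ^ (d - 1) / ((d : ℝ) ^ (d - 1) * (1 - c))) := by
  obtain ⟨ha0, ha1⟩ := ha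
  obtain ⟨hb0, hb1⟩ := hb
  obtain ⟨-, hcle1⟩ := hc1
  have hx10 : 0 ≤ x₁ := ha0.trans hx1a
  have hx11 : x₁ ≤ 1 := hx1b.trans hb1
  have hx2half : x₂ < 1/2 := lt_of_le_of_lt hx2c hchalf
  have hQ : (0:ℝ) < 1+2*x₁ := by linarith
  have hB : (0:ℝ) < 1+2*a := by linarith
  have hR : (0:ℝ) < 1+2*b := by linarith
  have hP0 : (0:ℝ) ≤ 1+x₁+x₁*x₂ := by nlinarith [mul_nonneg hx10 hx20]
  have hax2 : a*x₂ ≤ a*c := mul_le_mul_of_nonneg_left hx2c ha0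
  have hU0 : (0:ℝ) < 1+a+a*x₂ := by nlinarith [mul_nonneg ha0 hx20]
  obtain ⟨k, rfl⟩ : ∃ k, d = k+2 := ⟨d-2, by omega⟩
  simp only [show k+2-1 = k+1 from rfl, show k+2+1 = k+3 from rfl]
  refine ⟨?_, ?_, ?_, ?_⟩
  · -- part (i)
    intro _ hcond
    push_cast at hcond ⊢
    rw [div_le_div_iff₀ (pow_pos hQ _) (pow_pos hB _)]
    have hmx := aux_monoX k a x₁ x₂ ha0 hx1a hx20 (by linarith)
    have hAU : 1+a ≤ 1+a+a*x₂ := by nlinarith [mul_nonneg ha0 hx20]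
    have hp := aux_pow_sub_pow_le (1+a+a*x₂) (1+a) (by linarith) hAU k
    have hk1a : ((k:ℝ)+1)*a ≤ 1+a+a*x₂ := by
      have hk0 : (0:ℝ) ≤ (k:ℝ) := Nat.cast_nonneg k
      nlinarith [mul_nonneg ha0 hx20]
    have h2 : ((k:ℝ)+1)*(a*x₂)*(1+a+a*x₂)^k ≤ x₂*(1+a+a*x₂)^(k+1) := by
      calc ((k:ℝ)+1)*(a*x₂)*(1+a+a*x₂)^k = (((k:ℝ)+1)*a)*(1+a+a*x₂)^k*x₂ := by ring
        _ ≤ (1+a+a*x₂)*(1+a+a*x₂)^k*x₂ := by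
            apply mul_le_mul_of_nonneg_right
              (mul_le_mul_of_nonneg_right hk1a (pow_nonneg hU0.le k)) hx20
        _ = x₂*(1+a+a*x₂)^(k+1) := by ring
    have h3 : (1-x₂)*(1+a+a*x₂)^(k+1) ≤ (1+a)^(k+1) := by linarith [hp, h2]
    have t1 : (((k:ℝ)+2)*(1-x₂))*((1+x₁+x₁*x₂)^(k+1)*(1+2*a)^(k+3)) ≤
        (((k:ℝ)+2)*(1-x₂))*((1+a+a*x₂)^(k+1)*(1+2*x₁)^(k+3)) := by
      apply mul_le_mul_of_nonneg_left hmx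
      apply mul_nonneg (by positivity) (by linarith)
    have t2 : (((k:ℝ)+2)*(1+2*x₁)^(k+3))*((1-x₂)*(1+a+a*x₂)^(k+1)) ≤
        (((k:ℝ)+2)*(1+2*x₁)^(k+3))*((1+a)^(k+1)) := by
      apply mul_le_mul_of_nonneg_left h3
      exact mul_nonneg (by positivity) (pow_nonneg hQ.le _)
    linarith [t1, t2]
  · -- part (ii)
    intro _ hcond
    push_cast at hcond ⊢
    rw [div_le_div_iff₀ (pow_pos hQ _) (pow_pos hB _)]
    have hmx := aux_monoX k a x₁ x₂ ha0 hx1a hx20 (by linarith)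
    have hV0 : (0:ℝ) < 1+a+a*c := by nlinarith [mul_nonneg ha0 hc0]
    have hUV : 1+a+a*x₂ ≤ 1+a+a*c := by linarith
    have hlow := aux_le_pow_sub_pow (1+a+a*x₂) (1+a+a*c) hU0.le hUV k
    have hc' := mul_le_mul_of_nonneg_left hlow (show (0:ℝ) ≤ 1-c by linarith)
    have hKey : 1+a+a*x₂ ≤ (1-c)*(((k:ℝ)+1)*a) := by nlinarith [hax2]
    have h5 : (c-x₂)*(1+a+a*x₂)^(k+1) ≤
        (c-x₂)*((1+a+a*x₂)^k*((1-c)*(((k:ℝ)+1)*a))) := by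
      calc (c-x₂)*(1+a+a*x₂)^(k+1)
          = (c-x₂)*((1+a+a*x₂)^k*(1+a+a*x₂)) := by ring
        _ ≤ (c-x₂)*((1+a+a*x₂)^k*((1-c)*(((k:ℝ)+1)*a))) := by
            apply mul_le_mul_of_nonneg_left
              (mul_le_mul_of_nonneg_left hKey (pow_nonneg hU0.le k)) (by linarith)
    have h3 : (1-x₂)*(1+a+a*x₂)^(k+1) ≤ (1-c)*(1+a+a*c)^(k+1) := by linarith [hc', h5]
    have t1 : (((k:ℝ)+2)*(1-x₂))*((1+x₁+x₁*x₂)^(k+1)*(1+2*a)^(k+3)) ≤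
        (((k:ℝ)+2)*(1-x₂))*((1+a+a*x₂)^(k+1)*(1+2*x₁)^(k+3)) := by
      apply mul_le_mul_of_nonneg_left hmx
      apply mul_nonneg (by positivity) (by linarith)
    have t2 : (((k:ℝ)+2)*(1+2*x₁)^(k+3))*((1-x₂)*(1+a+a*x₂)^(k+1)) ≤
        (((k:ℝ)+2)*(1+2*x₁)^(k+3))*((1-c)*(1+a+a*c)^(k+1)) := by
      apply mul_le_mul_of_nonneg_left h3
      exact mul_nonneg (by positivity) (pow_nonneg hQ.le _)
    linarith [t1, t2]
  · -- part (iii)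
    intro _ hcond
    push_cast at hcond ⊢
    rw [div_le_div_iff₀ (pow_pos hQ _) (pow_pos hR _)]
    have hS0 : (0:ℝ) < 1+x₁+x₁*c := by nlinarith [mul_nonneg hx10 hc0]
    have hPS : 1+x₁+x₁*x₂ ≤ 1+x₁+x₁*c := by nlinarith [mul_le_mul_of_nonneg_left hx2c hx10]
    have hpow : (1+x₁+x₁*x₂)^(k+1) ≤ (1+x₁+x₁*c)^(k+1) := pow_le_pow_left₀ hP0 hPS _
    have hw0 : 0 ≤ x₁/(1+2*x₁) := by positivity
    have hwW : x₁/(1+2*x₁) ≤ b/(1+2*b) := by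
      rw [div_le_div_iff₀ hQ hR]; nlinarith
    have h1' : ((k:ℝ)+2)*((1-c)*b) ≤ 1+2*b := by nlinarith
    have h1 : (((k+1:ℕ):ℝ)+1)*((1-c)*(b/(1+2*b))) ≤ 1 := by
      push_cast
      rw [show ((k:ℝ)+1+1)*((1-c)*(b/(1+2*b))) = (((k:ℝ)+2)*((1-c)*b))/(1+2*b) by
        rw [eq_div_iff hR.ne']
        calc ((k:ℝ)+1+1)*((1-c)*(b/(1+2*b)))*(1+2*b)
            = ((k:ℝ)+1+1)*(1-c)*(b/(1+2*b)*(1+2*b)) := by ring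
          _ = ((k:ℝ)+1+1)*(1-c)*b := by rw [div_mul_cancel₀ b hR.ne']
          _ = ((k:ℝ)+2)*((1-c)*b) := by ring]
      rw [div_le_one hR]
      exact h1'
    have hW := aux_W (k+1) (1-c) (x₁/(1+2*x₁)) (b/(1+2*b)) (by linarith) hw0 hwW h1
    have e1 : 1-(1-c)*(x₁/(1+2*x₁)) = (1+x₁+x₁*c)/(1+2*x₁) := by
      rw [eq_div_iff hQ.ne']
      field_simp
      ring
    have e2 : 1-(1-c)*(b/(1+2*b)) = (1+b+b*c)/(1+2*b) := by
      rw [eq_div_iff hR.ne']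
      field_simp
      ring
    rw [e1, e2,
        div_pow, div_pow, div_mul_div_comm, div_mul_div_comm,
        div_le_div_iff₀ (by positivity) (by positivity)] at hW
    have t1 : (((k:ℝ)+2)*x₁*(1+2*b)^(k+2))*(1+x₁+x₁*x₂)^(k+1) ≤
        (((k:ℝ)+2)*x₁*(1+2*b)^(k+2))*(1+x₁+x₁*c)^(k+1) := by
      apply mul_le_mul_of_nonneg_left hpow
      exact mul_nonneg (mul_nonneg (by positivity) hx10) (pow_nonneg hR.le _)
    have t2 : ((k:ℝ)+2)*(x₁*(1+x₁+x₁*c)^(k+1)*(1+2*b)^(k+2)) ≤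
        ((k:ℝ)+2)*(b*(1+b+b*c)^(k+1)*(1+2*x₁)^(k+2)) := by
      calc ((k:ℝ)+2)*(x₁*(1+x₁+x₁*c)^(k+1)*(1+2*b)^(k+2))
          = ((k:ℝ)+2)*(x₁*(1+x₁+x₁*c)^(k+1)*((1+2*b)*(1+2*b)^(k+1))) := by ring
        _ ≤ ((k:ℝ)+2)*(b*(1+b+b*c)^(k+1)*((1+2*x₁)*(1+2*x₁)^(k+1))) :=
            mul_le_mul_of_nonneg_left hW (by positivity)
        _ = ((k:ℝ)+2)*(b*(1+b+b*c)^(k+1)*(1+2*x₁)^(k+2)) := by ring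
    linarith [t1, t2]
  · -- part (iv)
    intro h5 h7
    have hc2 : (0:ℝ) < 1-c := by linarith
    have h1x2 : (0:ℝ) < 1-x₂ := by linarith
    have hk3 : 3 ≤ k := by omega
    have hk5 : k ≤ 5 := by omega
    have hα : (0:ℝ) ≤ (1-x₂)*x₁ := mul_nonneg h1x2.le hx10
    have hdpos : (0:ℝ) < ((k+2:ℕ):ℝ)^(k+1)*(1-c) := by
      apply mul_pos (pow_pos _ _) hc2
      exact_mod_cast Nat.succ_pos _
    rw [div_le_div_iff₀ (pow_pos hQ _) hdpos]
    have hcx : (0:ℝ) ≤ (c-x₂)*(x₁*(1+x₁+x₁*x₂)^(k+1)) := by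
      apply mul_nonneg (by linarith) (mul_nonneg hx10 (pow_nonneg hP0 _))
    interval_cases k
    · have am := aux_amgm5 (4*((1-x₂)*x₁)) (1+x₁+x₁*x₂) (by positivity) hP0
      rw [show 4*((1-x₂)*x₁)+4*(1+x₁+x₁*x₂) = 4*(1+2*x₁) from by ring,
        mul_pow] at am
      norm_num at am hcx ⊢
      nlinarith [am, hcx]
    · have am := aux_amgm6 (5*((1-x₂)*x₁)) (1+x₁+x₁*x₂) (by positivity) hP0
      rw [show 5*((1-x₂)*x₁)+5*(1+x₁+x₁*x₂) = 5*(1+2*x₁) from by ring,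
        mul_pow] at am
      norm_num at am hcx ⊢
      nlinarith [am, hcx]
    · have am := aux_amgm7 (6*((1-x₂)*x₁)) (1+x₁+x₁*x₂) (by positivity) hP0
      rw [show 6*((1-x₂)*x₁)+6*(1+x₁+x₁*x₂) = 6*(1+2*x₁) from by ring,
        mul_pow] at am
      norm_num at am hcx ⊢
      nlinarith [am, hcx]
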